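/- arXiv:2107.04923 — 3 statements merged into one kernel-verified Lean document; each statement's English description precedes it below -/
import Mathlib

section
/- For fixed scalars Y > 0, z, and σ² > 0, ∫ exp(−z − v)|Y − exp(z + v)| φ(v; 0, σ²) dv = 1 − 2Φ(log(Y e^{−z}); 0, σ²) + Y exp(−z + σ²/2)[2Φ(log(Y e^{−z}) + σ²; 0, σ²) − 1]. -/
open MeasureTheory Real

/-- The `N(0, σ²)` density. -/
noncomputable def gpdf (s2 x : ℝ) : ℝ :=
  (Real.sqrt (2 * Real.pi * s2))⁻¹ * Real.exp (-(x ^ 2) / (2 * s2))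

/-- The `N(0, σ²)` cumulative distribution function. -/
noncomputable def gcdf (s2 x : ℝ) : ℝ := ∫ t in Set.Iic x, gpdf s2 t

lemma gpdf_eq (s2 : ℝ) (hs2 : 0 < s2) :
    gpdf s2 = ProbabilityTheory.gaussianPDFReal 0 ⟨s2, hs2.le⟩ := by
  funext x
  simp [gpdf, ProbabilityTheory.gaussianPDFReal]
  rfl

lemma integrable_gpdf (s2 : ℝ) (hs2 : 0 < s2) : Integrable (gpdf s2) := by
  rw [gpdf_eq s2 hs2]; exact ProbabilityTheory.integrable_gaussianPDFReal 0 _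

lemma integral_gpdf (s2 : ℝ) (hs2 : 0 < s2) : ∫ x, gpdf s2 x = 1 := by
  rw [gpdf_eq s2 hs2]
  exact ProbabilityTheory.integral_gaussianPDFReal_eq_one 0 (by intro h; apply hs2.ne'; exact congrArg Subtype.val h)

lemma exp_mul_gpdf (s2 : ℝ) (hs2 : 0 < s2) (v : ℝ) :
    Real.exp (-v) * gpdf s2 v = Real.exp (s2 / 2) * gpdf s2 (v + s2) := by
  unfold gpdf
  rw [mul_left_comm, mul_left_comm (Real.exp (s2/2)), ← Real.exp_add, ← Real.exp_add]
  congr 2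
  field_simp
  ring

lemma gpdf_shift (s2 c : ℝ) :
    ∫ v in Set.Iic c, gpdf s2 (v + s2) = gcdf s2 (c + s2) := by
  have hmp : MeasurePreserving (fun x : ℝ => x + s2) volume volume :=
    measurePreserving_add_right volume s2
  have h := hmp.setIntegral_preimage_emb
    (MeasurableEquiv.addRight s2).measurableEmbedding (gpdf s2) (Set.Iic (c + s2))
  have hpre : (fun x : ℝ => x + s2) ⁻¹' Set.Iic (c + s2) = Set.Iic c := by
    ext x; simp
  rw [hpre] at h
  rw [gcdf, ← h]

lemma gpdf_shift_Ioi (s2 c : ℝ) :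
    ∫ v in Set.Ioi c, gpdf s2 (v + s2) = ∫ v in Set.Ioi (c + s2), gpdf s2 v := by
  have hmp : MeasurePreserving (fun x : ℝ => x + s2) volume volume :=
    measurePreserving_add_right volume s2
  have h := hmp.setIntegral_preimage_emb
    (MeasurableEquiv.addRight s2).measurableEmbedding (gpdf s2) (Set.Ioi (c + s2))
  have hpre : (fun x : ℝ => x + s2) ⁻¹' Set.Ioi (c + s2) = Set.Ioi c := by
    ext x; simp
  rw [hpre] at h
  rw [← h]

lemma gpdf_nonneg (s2 x : ℝ) : 0 ≤ gpdf s2 x :=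
  mul_nonneg (inv_nonneg.2 (Real.sqrt_nonneg _)) (Real.exp_pos _).le

lemma continuous_gpdf (s2 : ℝ) : Continuous (gpdf s2) := by
  unfold gpdf; fun_prop

lemma integral_Ioi_gpdf (s2 c : ℝ) (hs2 : 0 < s2) :
    ∫ v in Set.Ioi c, gpdf s2 v = 1 - gcdf s2 c := by
  have h := intervalIntegral.integral_Iic_add_Ioi (b := c) ((integrable_gpdf s2 hs2).integrableOn)
    ((integrable_gpdf s2 hs2).integrableOn)
  rw [integral_gpdf s2 hs2] at h
  rw [← h, gcdf]; ring


/-- For fixed `Y > 0`, `z` and `σ² > 0`,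
`∫ exp(−z − v)|Y − exp(z + v)| φ(v; 0, σ²) dv
  = 1 − 2Φ(log(Y e^{−z}); 0, σ²) + Y exp(−z + σ²/2)[2Φ(log(Y e^{−z}) + σ²; 0, σ²) − 1]`. -/
theorem lare_second_term (Y z s2 : ℝ) (hY : 0 < Y) (hs2 : 0 < s2) :
    ∫ v : ℝ, Real.exp (-z - v) * |Y - Real.exp (z + v)| * gpdf s2 v
      = 1 - 2 * gcdf s2 (Real.log (Y * Real.exp (-z)))
        + Y * Real.exp (-z + s2 / 2)
          * (2 * gcdf s2 (Real.log (Y * Real.exp (-z)) + s2) - 1) := by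
  set c := Real.log (Y * Real.exp (-z)) with hc
  have hec : Real.exp c = Y * Real.exp (-z) := Real.exp_log (by positivity)
  -- rewrite integrand
  have hintegrand : ∀ v : ℝ, Real.exp (-z - v) * |Y - Real.exp (z + v)| * gpdf s2 v
      = |Real.exp (c - v) - 1| * gpdf s2 v := by
    intro v
    congr 1
    rw [← abs_of_pos (Real.exp_pos (-z - v)), ← abs_mul]
    congr 1
    rw [show c - v = c + (-v) by ring, Real.exp_add c (-v), hec, mul_sub, ← Real.exp_add,
      show -z - v + (z + v) = 0 by ring, Real.exp_zero,
      show -z - v = -z + -v by ring, Real.exp_add]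
    ring
  simp_rw [hintegrand]
  -- integrability facts
  have hexpg : (fun v : ℝ => Real.exp (-v) * gpdf s2 v)
      = fun v => Real.exp (s2 / 2) * gpdf s2 (v + s2) := funext (exp_mul_gpdf s2 hs2)
  have hint1 : Integrable (fun v : ℝ => Real.exp (-v) * gpdf s2 v) := by
    rw [hexpg]
    exact ((integrable_gpdf s2 hs2).comp_add_right s2).const_mul _
  have hceq : (fun v : ℝ => Real.exp (c - v) * gpdf s2 v)
      = fun v => Real.exp c * (Real.exp (-v) * gpdf s2 v) := by
    funext v; rw [← mul_assoc, ← Real.exp_add]; ring_nf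
  have hint2 : Integrable (fun v : ℝ => Real.exp (c - v) * gpdf s2 v) := by
    rw [hceq]; exact hint1.const_mul _
  have hintf : Integrable (fun v : ℝ => |Real.exp (c - v) - 1| * gpdf s2 v) := by
    apply Integrable.mono (hint2.add (integrable_gpdf s2 hs2))
    · exact (((Real.continuous_exp.comp (continuous_const.sub continuous_id)).sub
        continuous_const).abs.mul (continuous_gpdf s2)).aestronglyMeasurable
    · filter_upwards with v
      have hg := gpdf_nonneg s2 v
      have hsum : ((fun v => Real.exp (c - v) * gpdf s2 v) + gpdf s2) v
          = Real.exp (c - v) * gpdf s2 v + gpdf s2 v := rfl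
      rw [Real.norm_eq_abs, Real.norm_eq_abs, abs_mul, abs_abs,
        abs_of_nonneg hg, hsum,
        abs_of_nonneg (add_nonneg (mul_nonneg (Real.exp_pos _).le hg) hg)]
      have h1 : |Real.exp (c - v) - 1| ≤ Real.exp (c - v) + 1 := by
        rw [abs_sub_le_iff]
        constructor <;> nlinarith [Real.exp_pos (c - v)]
      nlinarith [mul_le_mul_of_nonneg_right h1 hg]
  -- split the integral
  rw [← intervalIntegral.integral_Iic_add_Ioi (b := c) hintf.integrableOn hintf.integrableOn]
  -- Iic part
  have hIic : ∫ v in Set.Iic c, |Real.exp (c - v) - 1| * gpdf s2 v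
      = Real.exp c * Real.exp (s2 / 2) * gcdf s2 (c + s2) - gcdf s2 c := by
    have h1 : ∫ v in Set.Iic c, |Real.exp (c - v) - 1| * gpdf s2 v
        = ∫ v in Set.Iic c, (Real.exp (c - v) * gpdf s2 v - gpdf s2 v) := by
      apply setIntegral_congr_fun measurableSet_Iic
      intro x hx
      dsimp only
      have hxe : (1:ℝ) ≤ Real.exp (c - x) := Real.one_le_exp (by simpa using hx)
      rw [abs_of_nonneg (by linarith)]
      ring
    rw [h1, integral_sub hint2.integrableOn (integrable_gpdf s2 hs2).integrableOn]
    have h2 : ∫ v in Set.Iic c, Real.exp (c - v) * gpdf s2 v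
        = Real.exp c * Real.exp (s2 / 2) * gcdf s2 (c + s2) := by
      rw [hceq, integral_const_mul]
      have h3 : ∫ v in Set.Iic c, Real.exp (-v) * gpdf s2 v
          = Real.exp (s2 / 2) * gcdf s2 (c + s2) := by
        rw [hexpg, integral_const_mul, gpdf_shift s2 c]
      rw [h3]; ring
    rw [h2]
    rfl
  -- Ioi part
  have hIoi : ∫ v in Set.Ioi c, |Real.exp (c - v) - 1| * gpdf s2 v
      = (1 - gcdf s2 c) - Real.exp c * Real.exp (s2 / 2) * (1 - gcdf s2 (c + s2)) := by
    have h1 : ∫ v in Set.Ioi c, |Real.exp (c - v) - 1| * gpdf s2 v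
        = ∫ v in Set.Ioi c, (gpdf s2 v - Real.exp (c - v) * gpdf s2 v) := by
      apply setIntegral_congr_fun measurableSet_Ioi
      intro x hx
      dsimp only
      have hxc : c - x ≤ 0 := by simp at hx; linarith
      have hxe : Real.exp (c - x) ≤ 1 := Real.exp_le_one_iff.mpr hxc
      rw [abs_of_nonpos (by linarith)]
      ring
    rw [h1, integral_sub (integrable_gpdf s2 hs2).integrableOn hint2.integrableOn]
    have h2 : ∫ v in Set.Ioi c, Real.exp (c - v) * gpdf s2 v
        = Real.exp c * Real.exp (s2 / 2) * (1 - gcdf s2 (c + s2)) := by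
      rw [hceq, integral_const_mul, hexpg, integral_const_mul, gpdf_shift_Ioi s2 c,
        integral_Ioi_gpdf s2 (c + s2) hs2]
      ring
    rw [h2, integral_Ioi_gpdf s2 c hs2]
  rw [hIic, hIoi]
  have hY2 : Y * Real.exp (-z + s2 / 2) = Real.exp c * Real.exp (s2 / 2) := by
    rw [hec, Real.exp_add]; ring
  rw [hY2]; ring
end

section
/- In the exponential regression measurement error model: if Y = exp(Xᵀθ₀) + ε with ε independent of X, E ε = 0, and Z = X + U with U ~ N(0, Σ_u) independent of (X, ε), then E[Y Z exp(Zᵀθ)] = exp(θᵀΣ_uθ/2) · E[(X + Σ_uθ) exp((θ+θ₀)ᵀX)] and E[Y exp(Zᵀθ)] = exp(θᵀΣ_uθ/2) · E[exp((θ+θ₀)ᵀX)], assuming all expectations are finite. -/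
open MeasureTheory ProbabilityTheory Matrix Real
open scoped NNReal ENNReal
set_option linter.unusedSectionVars false
set_option maxHeartbeats 1000000

lemma gauss_pdf_shift (v : ℝ≥0) (hv : v ≠ 0) (x : ℝ) :
    Real.exp x * gaussianPDFReal 0 v x = Real.exp ((v:ℝ)/2) * gaussianPDFReal (v:ℝ) v x := by
  have hv' : (v:ℝ) ≠ 0 := by exact_mod_cast hv
  unfold gaussianPDFReal
  rw [mul_left_comm, mul_left_comm (Real.exp ((v:ℝ)/2)), ← Real.exp_add, ← Real.exp_add]
  congr 2
  field_simp
  ring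

lemma exp_gaussianReal_integrable (v : ℝ≥0) :
    Integrable (fun x => Real.exp x) (gaussianReal 0 v) := by
  by_cases hv : v = 0
  · rw [hv, gaussianReal_zero_var]
    exact (integrable_const (Real.exp 0)).congr (ae_eq_dirac (fun x => Real.exp x)).symm
  · rw [gaussianReal_of_var_ne_zero _ hv, gaussianPDF_def,
      integrable_withDensity_iff (measurable_gaussianPDFReal 0 v).ennreal_ofReal
        (Filter.Eventually.of_forall fun x => ENNReal.ofReal_lt_top)]
    have : (fun x => Real.exp x * (ENNReal.ofReal (gaussianPDFReal 0 v x)).toReal)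
        = fun x => Real.exp ((v:ℝ)/2) * gaussianPDFReal (v:ℝ) v x := by
      funext x
      rw [ENNReal.toReal_ofReal (gaussianPDFReal_nonneg 0 v x)]
      exact gauss_pdf_shift v hv x
    rw [this]
    exact (integrable_gaussianPDFReal _ _).const_mul _

lemma exp_gaussianReal_integral (v : ℝ≥0) :
    ∫ x, Real.exp x ∂(gaussianReal 0 v) = Real.exp ((v:ℝ)/2) := by
  by_cases hv : v = 0
  · simp [hv]
  · rw [gaussianReal_of_var_ne_zero _ hv, gaussianPDF_def]
    have h1 : (fun x => ENNReal.ofReal (gaussianPDFReal 0 v x))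
        = fun x => ((Real.toNNReal (gaussianPDFReal 0 v x) : ℝ≥0) : ℝ≥0∞) := rfl
    rw [h1, integral_withDensity_eq_integral_smul
      ((measurable_gaussianPDFReal 0 v).real_toNNReal) _]
    have : (fun x => Real.toNNReal (gaussianPDFReal 0 v x) • Real.exp x)
        = fun x => Real.exp ((v:ℝ)/2) * gaussianPDFReal (v:ℝ) v x := by
      funext x
      rw [NNReal.smul_def, smul_eq_mul, Real.coe_toNNReal _ (gaussianPDFReal_nonneg 0 v x),
        mul_comm]
      exact gauss_pdf_shift v hv x
    rw [this, integral_const_mul, integral_gaussianPDFReal_eq_one _ hv, mul_one]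
section
variable {p : ℕ} {Ω : Type*} [MeasurableSpace Ω] (P : Measure Ω) [IsProbabilityMeasure P]
  (U : Ω → Fin p → ℝ) (hU : Measurable U) (Su : Matrix (Fin p) (Fin p) ℝ)
  (hSu : Su.PosSemidef)
  (hUgauss : ∀ a : Fin p → ℝ,
      Measure.map (fun ω => (U ω) ⬝ᵥ a) P = gaussianReal 0 (Real.toNNReal (a ⬝ᵥ Su *ᵥ a)))

lemma measurable_dotP (a : Fin p → ℝ) : Measurable (fun u : Fin p → ℝ => u ⬝ᵥ a) := by
  unfold dotProduct
  exact Finset.measurable_sum _ fun i _ => (measurable_pi_apply i).mul_const _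

include hU hSu hUgauss

lemma Umgf_int (a : Fin p → ℝ) : Integrable (fun ω => Real.exp (U ω ⬝ᵥ a)) P := by
  have h := exp_gaussianReal_integrable (Real.toNNReal (a ⬝ᵥ Su *ᵥ a))
  rw [← hUgauss a] at h
  exact (integrable_map_measure measurable_exp.aestronglyMeasurable
    ((measurable_dotP a).comp hU).aemeasurable).mp h

lemma Umgf (a : Fin p → ℝ) :
    ∫ ω, Real.exp (U ω ⬝ᵥ a) ∂P = Real.exp ((a ⬝ᵥ Su *ᵥ a) / 2) := by
  have hnn : 0 ≤ a ⬝ᵥ Su *ᵥ a := by simpa using hSu.dotProduct_mulVec_nonneg a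
  have h := integral_map (μ := P) (φ := fun ω => U ω ⬝ᵥ a)
    ((measurable_dotP a).comp hU).aemeasurable
    (measurable_exp.aestronglyMeasurable (μ := Measure.map (fun ω => U ω ⬝ᵥ a) P))
  rw [hUgauss a, exp_gaussianReal_integral, Real.coe_toNNReal _ hnn] at h
  exact h.symm

lemma Uexp_moment (θ : Fin p → ℝ) (j : Fin p) :
    Integrable (fun ω => U ω j * Real.exp (U ω ⬝ᵥ θ)) P ∧
    ∫ ω, U ω j * Real.exp (U ω ⬝ᵥ θ) ∂P
      = (Su *ᵥ θ) j * Real.exp ((θ ⬝ᵥ Su *ᵥ θ) / 2) := by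
  classical
  set c0 := θ ⬝ᵥ Su *ᵥ θ with hc0
  set cj := (Su *ᵥ θ) j with hcj
  set sjj := Su j j with hsjj
  set e : Fin p → ℝ := Pi.single j 1 with he
  have hsym : ∀ i k, Su i k = Su k i := by
    intro i k
    have := congrFun (congrFun hSu.1 i) k
    simpa [Matrix.conjTranspose_apply] using this.symm
  have hUe : ∀ v : Fin p → ℝ, v ⬝ᵥ e = v j := by
    intro v; simp [he, dotProduct_single]
  have heSu : ∀ v : Fin p → ℝ, e ⬝ᵥ Su *ᵥ v = (Su *ᵥ v) j := by
    intro v; simp [he, single_dotProduct]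
  have hSue : ∀ v : Fin p → ℝ, v ⬝ᵥ Su *ᵥ e = (Su *ᵥ v) j := by
    intro v
    simp only [mulVec, dotProduct, he, Pi.single_apply, mul_ite, mul_one, mul_zero,
      Finset.sum_ite_eq', Finset.mem_univ, if_true]
    exact Finset.sum_congr rfl fun i _ => by rw [hsym i j]; ring
  have key : ∀ s : ℝ, (θ + s • e) ⬝ᵥ Su *ᵥ (θ + s • e) = c0 + 2 * cj * s + sjj * s ^ 2 := by
    intro s
    rw [add_dotProduct, mulVec_add, dotProduct_add, dotProduct_add, mulVec_smul,
      dotProduct_smul, smul_dotProduct, smul_dotProduct, dotProduct_smul,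
      smul_eq_mul, smul_eq_mul, smul_eq_mul, smul_eq_mul, hSue θ, heSu θ]
    have : (Su *ᵥ e) j = sjj := by
      simp only [mulVec, dotProduct, he, Pi.single_apply, mul_ite, mul_one, mul_zero,
        Finset.sum_ite_eq', Finset.mem_univ, if_true]
      exact hsjj.symm
    rw [heSu e, this, ← hc0, ← hcj]
    ring
  have hdot : ∀ (s : ℝ) (ω : Ω), U ω ⬝ᵥ θ + s * U ω j = U ω ⬝ᵥ (θ + s • e) := by
    intro s ω
    rw [dotProduct_add, dotProduct_smul, smul_eq_mul, hUe]
  -- integral formula for all s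
  have hFeq : ∀ s : ℝ, (∫ ω, Real.exp (U ω ⬝ᵥ θ + s * U ω j) ∂P)
      = Real.exp ((c0 + 2 * cj * s + sjj * s ^ 2) / 2) := by
    intro s
    have : (fun ω => Real.exp (U ω ⬝ᵥ θ + s * U ω j))
        = fun ω => Real.exp (U ω ⬝ᵥ (θ + s • e)) := by
      funext ω; rw [hdot]
    rw [this, Umgf P U hU Su hSu hUgauss (θ + s • e), key s]
  -- dominated differentiation
  set F : ℝ → Ω → ℝ := fun s ω => Real.exp (U ω ⬝ᵥ θ + s * U ω j) with hF
  set F' : ℝ → Ω → ℝ := fun s ω => U ω j * Real.exp (U ω ⬝ᵥ θ + s * U ω j) with hF'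
  set bound : Ω → ℝ := fun ω =>
    Real.exp (U ω ⬝ᵥ (θ + (2:ℝ) • e)) + 2 * Real.exp (U ω ⬝ᵥ θ)
      + Real.exp (U ω ⬝ᵥ (θ - (2:ℝ) • e)) with hbnd
  have hUmeas : ∀ a : Fin p → ℝ, Measurable fun ω => U ω ⬝ᵥ a :=
    fun a => (measurable_dotP a).comp hU
  have hUj : Measurable fun ω => U ω j := (measurable_pi_apply j).comp hU
  have main := hasDerivAt_integral_of_dominated_loc_of_deriv_le (μ := P) (F := F) (F' := F')
    (x₀ := 0) (bound := bound) (Metric.ball_mem_nhds 0 one_pos)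
    (Filter.Eventually.of_forall fun s =>
      (measurable_exp.comp ((hUmeas θ).add ((hUj).const_mul s))).aestronglyMeasurable)
    (by
      have : F 0 = fun ω => Real.exp (U ω ⬝ᵥ θ) := by
        funext ω; simp [hF]
      rw [this]; exact Umgf_int P U hU Su hSu hUgauss θ)
    ((hUj.mul (measurable_exp.comp ((hUmeas θ).add ((hUj).const_mul 0)))).aestronglyMeasurable)
    (Filter.Eventually.of_forall fun ω s hs => by
      have hs1 : |s| ≤ 1 := le_of_lt (by simpa [Real.dist_eq] using hs)
      set u := U ω j
      set t := U ω ⬝ᵥ θ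
      have h1 : |u| ≤ Real.exp |u| := (le_add_of_nonneg_left zero_le_one).trans
        (by simpa [add_comm] using Real.add_one_le_exp |u|)
      have h2 : Real.exp (t + s * u) ≤ Real.exp (t + |u|) := by
        apply Real.exp_le_exp.2
        have hsu : |s * u| ≤ |u| := by
          rw [abs_mul]; exact mul_le_of_le_one_left (abs_nonneg u) hs1
        have : s * u ≤ |u| := (le_abs_self _).trans hsu
        linarith
      have h3 : ‖F' s ω‖ ≤ Real.exp |u| * Real.exp (t + |u|) := by
        rw [hF']
        simp only [norm_mul, Real.norm_eq_abs, Real.abs_exp]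
        exact mul_le_mul h1 h2 (Real.exp_pos _).le (Real.exp_pos _).le
      have h4 : Real.exp |u| * Real.exp (t + |u|) = Real.exp t * Real.exp (2 * |u|) := by
        rw [← Real.exp_add, ← Real.exp_add]; ring_nf
      have h5 : Real.exp (2 * |u|) ≤ Real.exp (2 * u) + Real.exp (-(2 * u)) := by
        rcases abs_cases u with ⟨h, _⟩ | ⟨h, _⟩
        · rw [h]; exact le_add_of_nonneg_right (Real.exp_pos _).le
        · have h2u : (2:ℝ) * -u = -(2*u) := by ring
          rw [h, h2u]; exact le_add_of_nonneg_left (Real.exp_pos _).le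
      have h6 : bound ω = Real.exp t * (Real.exp (2 * u) + 2 + Real.exp (-(2 * u))) := by
        simp only [hbnd]
        have e1 : U ω ⬝ᵥ (θ + (2:ℝ) • e) = t + 2 * u := by
          rw [dotProduct_add, dotProduct_smul, smul_eq_mul, hUe]
        have e2 : U ω ⬝ᵥ (θ - (2:ℝ) • e) = t - 2 * u := by
          rw [dotProduct_sub, dotProduct_smul, smul_eq_mul, hUe]
        rw [e1, e2, Real.exp_add, Real.exp_sub, Real.exp_neg]
        field_simp
        ring
      calc ‖F' s ω‖ ≤ Real.exp t * Real.exp (2 * |u|) := by rw [← h4]; exact h3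
        _ ≤ Real.exp t * (Real.exp (2 * u) + 2 + Real.exp (-(2 * u))) := by
            have h7 : Real.exp (2*u) + Real.exp (-(2*u)) ≤ Real.exp (2*u) + 2 + Real.exp (-(2*u)) := by linarith
            exact mul_le_mul_of_nonneg_left (h5.trans h7) (Real.exp_pos t).le
        _ = bound ω := h6.symm)
    (by
      have i1 := Umgf_int P U hU Su hSu hUgauss (θ + (2:ℝ) • e)
      have i2 := Umgf_int P U hU Su hSu hUgauss θ
      have i3 := Umgf_int P U hU Su hSu hUgauss (θ - (2:ℝ) • e)
      exact (i1.add (i2.const_mul 2)).add i3)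
    (Filter.Eventually.of_forall fun ω s _ => by
      have hd : HasDerivAt (fun s : ℝ => U ω ⬝ᵥ θ + s * U ω j) (U ω j) s := by
        simpa using ((hasDerivAt_id s).mul_const (U ω j)).const_add (U ω ⬝ᵥ θ)
      simpa [hF, hF', mul_comm] using hd.exp)
  obtain ⟨hint, hder⟩ := main
  have hG : (fun s : ℝ => ∫ ω, F s ω ∂P)
      = fun s => Real.exp ((c0 + 2 * cj * s + sjj * s ^ 2) / 2) := funext fun s => hFeq s
  rw [hG] at hder
  have hq : HasDerivAt (fun s : ℝ => (c0 + 2 * cj * s + sjj * s ^ 2) / 2) cj 0 := by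
    have h1 : HasDerivAt (fun s : ℝ => c0 + 2 * cj * s + sjj * s ^ 2) (2 * cj) 0 := by
      have := (((hasDerivAt_id (0:ℝ)).const_mul (2*cj)).const_add c0).add
        ((hasDerivAt_pow 2 (0:ℝ)).const_mul sjj)
      simpa [Pi.add_def] using this
    simpa using h1.div_const 2
  have hGd : HasDerivAt (fun s => Real.exp ((c0 + 2 * cj * s + sjj * s ^ 2) / 2))
      (Real.exp (c0 / 2) * cj) 0 := by
    simpa using hq.exp
  have huniq : (∫ ω, F' 0 ω ∂P) = Real.exp (c0 / 2) * cj := hder.unique hGd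
  have hzero : F' 0 = fun ω => U ω j * Real.exp (U ω ⬝ᵥ θ) := by
    funext ω; simp [hF']
  rw [hzero] at hint huniq
  exact ⟨hint, by rw [huniq, mul_comm]⟩
end

/-- Exponential regression measurement error model: if `Y = exp(Xᵀθ₀) + ε` with `ε`
independent of `X` and `E ε = 0`, and `Z = X + U` with `U ~ N(0, Σ_u)` (Cramér–Wold
characterization) independent of `(X, ε)`, then, assuming all the expectations involved
are finite,
`E[Y Z exp(Zᵀθ)] = exp(θᵀΣ_uθ/2) E[(X + Σ_uθ) exp((θ+θ₀)ᵀX)]` (componentwise) and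
`E[Y exp(Zᵀθ)] = exp(θᵀΣ_uθ/2) E[exp((θ+θ₀)ᵀX)]`. -/
theorem exp_regression_moment_identities {p : ℕ} {Ω : Type*} [MeasurableSpace Ω]
    (P : Measure Ω) [IsProbabilityMeasure P]
    (X U : Ω → Fin p → ℝ) (ε : Ω → ℝ)
    (hX : Measurable X) (hU : Measurable U) (hε : Measurable ε)
    (Su : Matrix (Fin p) (Fin p) ℝ) (hSu : Su.PosSemidef)
    (hUgauss : ∀ a : Fin p → ℝ,
      Measure.map (fun ω => (U ω) ⬝ᵥ a) P
        = gaussianReal 0 (Real.toNNReal (a ⬝ᵥ Su *ᵥ a)))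
    (hUindep : IndepFun U (fun ω => (X ω, ε ω)) P)
    (hεindep : IndepFun ε X P)
    (hεmean : ∫ ω, ε ω ∂P = 0)
    (θ θ0 : Fin p → ℝ)
    (Y : Ω → ℝ) (hY : ∀ ω, Y ω = Real.exp ((X ω) ⬝ᵥ θ0) + ε ω)
    (Z : Ω → Fin p → ℝ) (hZ : ∀ ω, Z ω = X ω + U ω)
    (hint1 : ∀ j, Integrable (fun ω => Y ω * Z ω j * Real.exp ((Z ω) ⬝ᵥ θ)) P)
    (hint2 : Integrable (fun ω => Y ω * Real.exp ((Z ω) ⬝ᵥ θ)) P)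
    (hint3 : ∀ j, Integrable
      (fun ω => (X ω j + (Su *ᵥ θ) j) * Real.exp ((X ω) ⬝ᵥ (θ + θ0))) P)
    (hint4 : Integrable (fun ω => Real.exp ((X ω) ⬝ᵥ (θ + θ0))) P) :
    (∀ j, ∫ ω, Y ω * Z ω j * Real.exp ((Z ω) ⬝ᵥ θ) ∂P
        = Real.exp ((θ ⬝ᵥ Su *ᵥ θ) / 2)
          * ∫ ω, (X ω j + (Su *ᵥ θ) j) * Real.exp ((X ω) ⬝ᵥ (θ + θ0)) ∂P) ∧
    (∫ ω, Y ω * Real.exp ((Z ω) ⬝ᵥ θ) ∂P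
        = Real.exp ((θ ⬝ᵥ Su *ᵥ θ) / 2) * ∫ ω, Real.exp ((X ω) ⬝ᵥ (θ + θ0)) ∂P) := by
  set m := Real.exp ((θ ⬝ᵥ Su *ᵥ θ) / 2) with hm
  set H : Ω → ℝ := fun ω => Real.exp (U ω ⬝ᵥ θ) with hH
  set H1 : Fin p → Ω → ℝ := fun j ω => U ω j * Real.exp (U ω ⬝ᵥ θ) with hH1
  set G : Ω → ℝ := fun ω => (Real.exp (X ω ⬝ᵥ θ0) + ε ω) * Real.exp (X ω ⬝ᵥ θ) with hG
  set G1 : Fin p → Ω → ℝ :=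
    fun j ω => (Real.exp (X ω ⬝ᵥ θ0) + ε ω) * X ω j * Real.exp (X ω ⬝ᵥ θ) with hG1
  -- measurable building blocks
  have hXd : ∀ a : Fin p → ℝ, Measurable fun ω => X ω ⬝ᵥ a :=
    fun a => (measurable_dotP a).comp hX
  have hUd : ∀ a : Fin p → ℝ, Measurable fun ω => U ω ⬝ᵥ a :=
    fun a => (measurable_dotP a).comp hU
  -- functions on the range spaces
  have hφ : Measurable fun u : Fin p → ℝ => Real.exp (u ⬝ᵥ θ) :=
    measurable_exp.comp (measurable_dotP θ)
  have hφ1 : ∀ j, Measurable fun u : Fin p → ℝ => u j * Real.exp (u ⬝ᵥ θ) :=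
    fun j => (measurable_pi_apply j).mul hφ
  have hg : Measurable fun q : (Fin p → ℝ) × ℝ =>
      (Real.exp (q.1 ⬝ᵥ θ0) + q.2) * Real.exp (q.1 ⬝ᵥ θ) :=
    ((measurable_exp.comp ((measurable_dotP θ0).comp measurable_fst)).add
      measurable_snd).mul (measurable_exp.comp ((measurable_dotP θ).comp measurable_fst))
  have hg1 : ∀ j, Measurable fun q : (Fin p → ℝ) × ℝ =>
      (Real.exp (q.1 ⬝ᵥ θ0) + q.2) * q.1 j * Real.exp (q.1 ⬝ᵥ θ) :=
    fun j => (((measurable_exp.comp ((measurable_dotP θ0).comp measurable_fst)).add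
      measurable_snd).mul ((measurable_pi_apply j).comp measurable_fst)).mul
      (measurable_exp.comp ((measurable_dotP θ).comp measurable_fst))
  have hHmeas : Measurable H := measurable_exp.comp (hUd θ)
  have hH1meas : ∀ j, Measurable (H1 j) := fun j => ((measurable_pi_apply j).comp hU).mul hHmeas
  have hGmeas : Measurable G :=
    ((measurable_exp.comp (hXd θ0)).add hε).mul (measurable_exp.comp (hXd θ))
  have hG1meas : ∀ j, Measurable (G1 j) := fun j =>
    (((measurable_exp.comp (hXd θ0)).add hε).mul ((measurable_pi_apply j).comp hX)).mul
      (measurable_exp.comp (hXd θ))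
  -- independence
  have indepHG : IndepFun H G P := hUindep.comp hφ hg
  have indepH1G : ∀ j, IndepFun (H1 j) G P := fun j => hUindep.comp (hφ1 j) hg
  have indepHG1 : ∀ j, IndepFun H (G1 j) P := fun j => hUindep.comp hφ (hg1 j)
  -- Gaussian moments
  have hUm : ∫ ω, H ω ∂P = m := Umgf P U hU Su hSu hUgauss θ
  have hUmint : Integrable H P := Umgf_int P U hU Su hSu hUgauss θ
  have hUj : ∀ j, Integrable (H1 j) P ∧ ∫ ω, H1 j ω ∂P = (Su *ᵥ θ) j * m :=
    fun j => Uexp_moment P U hU Su hSu hUgauss θ j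
  -- pointwise identities
  have hpt2 : ∀ ω, Y ω * Real.exp (Z ω ⬝ᵥ θ) = G ω * H ω := by
    intro ω
    rw [hY, hZ, add_dotProduct, Real.exp_add]
    simp only [hG, hH]
    ring
  have hpt1 : ∀ j ω, Y ω * Z ω j * Real.exp (Z ω ⬝ᵥ θ) = G1 j ω * H ω + G ω * H1 j ω := by
    intro j ω
    rw [hY, hZ, add_dotProduct, Real.exp_add]
    simp only [hG, hG1, hH, hH1, Pi.add_apply]
    ring
  -- H is a.e. nonzero
  have Hne : ¬ H =ᵐ[P] 0 := by
    intro h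
    obtain ⟨ω, hω⟩ := h.exists
    exact absurd hω (ne_of_gt (Real.exp_pos _))
  -- integrability chain
  have iGH : Integrable (G * H) P :=
    hint2.congr (Filter.Eventually.of_forall fun ω => hpt2 ω)
  have iG : Integrable G P :=
    indepHG.symm.integrable_left_of_integrable_op (· * ·) 1 one_ne_zero
        (fun x y => by simp [enorm_mul]) iGH
      hGmeas.aestronglyMeasurable hHmeas.aestronglyMeasurable Hne
  have iGH1 : ∀ j, Integrable (G * H1 j) P :=
    fun j => (indepH1G j).symm.integrable_mul iG (hUj j).1
  have iG1H : ∀ j, Integrable (G1 j * H) P := by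
    intro j
    refine ((hint1 j).sub (iGH1 j)).congr (Filter.Eventually.of_forall fun ω => ?_)
    simp only [Pi.sub_apply, Pi.mul_apply]
    rw [hpt1 j ω]
    ring
  have iG1 : ∀ j, Integrable (G1 j) P := fun j =>
    (indepHG1 j).symm.integrable_left_of_integrable_op (· * ·) 1 one_ne_zero
        (fun x y => by simp [enorm_mul]) (iG1H j)
      (hG1meas j).aestronglyMeasurable hHmeas.aestronglyMeasurable Hne
  -- X-side integrabilities
  have iXjE : ∀ j, Integrable (fun ω => X ω j * Real.exp (X ω ⬝ᵥ (θ + θ0))) P := by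
    intro j
    refine ((hint3 j).sub (hint4.const_mul ((Su *ᵥ θ) j))).congr
      (Filter.Eventually.of_forall fun ω => ?_)
    simp only [Pi.sub_apply]
    ring
  have hsplitG : ∀ ω, G ω = Real.exp (X ω ⬝ᵥ (θ + θ0)) + ε ω * Real.exp (X ω ⬝ᵥ θ) := by
    intro ω
    simp only [hG, dotProduct_add, Real.exp_add]
    ring
  have hsplitG1 : ∀ j ω, G1 j ω
      = X ω j * Real.exp (X ω ⬝ᵥ (θ + θ0)) + ε ω * (X ω j * Real.exp (X ω ⬝ᵥ θ)) := by
    intro j ω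
    simp only [hG1, dotProduct_add, Real.exp_add]
    ring
  have iEps : Integrable (fun ω => ε ω * Real.exp (X ω ⬝ᵥ θ)) P := by
    refine (iG.sub hint4).congr (Filter.Eventually.of_forall fun ω => ?_)
    simp only [Pi.sub_apply]
    rw [hsplitG ω]
    ring
  have iEpsXj : ∀ j, Integrable (fun ω => ε ω * (X ω j * Real.exp (X ω ⬝ᵥ θ))) P := by
    intro j
    refine ((iG1 j).sub (iXjE j)).congr (Filter.Eventually.of_forall fun ω => ?_)
    simp only [Pi.sub_apply]
    rw [hsplitG1 j ω]
    ring
  -- zero integrals from independence of ε and X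
  have hz0 : ∫ ω, ε ω * Real.exp (X ω ⬝ᵥ θ) ∂P = 0 := by
    have hi : IndepFun ε (fun ω => Real.exp (X ω ⬝ᵥ θ)) P :=
      hεindep.comp measurable_id (measurable_exp.comp (measurable_dotP θ))
    have := hi.integral_mul_eq_mul_integral hε.aestronglyMeasurable
      (measurable_exp.comp (hXd θ)).aestronglyMeasurable
    rw [show (∫ ω, ε ω * Real.exp (X ω ⬝ᵥ θ) ∂P)
        = ∫ ω, (ε * fun ω => Real.exp (X ω ⬝ᵥ θ)) ω ∂P from rfl, this, hεmean, zero_mul]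
  have hz1 : ∀ j, ∫ ω, ε ω * (X ω j * Real.exp (X ω ⬝ᵥ θ)) ∂P = 0 := by
    intro j
    have hi : IndepFun ε (fun ω => X ω j * Real.exp (X ω ⬝ᵥ θ)) P :=
      hεindep.comp measurable_id (hφ1 j)
    have := hi.integral_mul_eq_mul_integral hε.aestronglyMeasurable
      (((measurable_pi_apply j).comp hX).mul (measurable_exp.comp (hXd θ))).aestronglyMeasurable
    rw [show (∫ ω, ε ω * (X ω j * Real.exp (X ω ⬝ᵥ θ)) ∂P)
        = ∫ ω, (ε * fun ω => X ω j * Real.exp (X ω ⬝ᵥ θ)) ω ∂P from rfl, this, hεmean, zero_mul]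
  -- integrals of G and G1
  have hIG : ∫ ω, G ω ∂P = ∫ ω, Real.exp (X ω ⬝ᵥ (θ + θ0)) ∂P := by
    rw [integral_congr_ae (Filter.Eventually.of_forall hsplitG),
      integral_add hint4 iEps, hz0, add_zero]
  have hIG1 : ∀ j, ∫ ω, G1 j ω ∂P = ∫ ω, X ω j * Real.exp (X ω ⬝ᵥ (θ + θ0)) ∂P := by
    intro j
    rw [integral_congr_ae (Filter.Eventually.of_forall (hsplitG1 j)),
      integral_add (iXjE j) (iEpsXj j), hz1 j, add_zero]
  constructor
  · intro j
    have e1 : ∫ ω, Y ω * Z ω j * Real.exp (Z ω ⬝ᵥ θ) ∂P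
        = (∫ ω, (G1 j * H) ω ∂P) + ∫ ω, (G * H1 j) ω ∂P := by
      rw [← integral_add (iG1H j) (iGH1 j)]
      exact integral_congr_ae (Filter.Eventually.of_forall fun ω => by
        simp only [Pi.add_apply, Pi.mul_apply]; exact hpt1 j ω)
    have e2 : ∫ ω, (G1 j * H) ω ∂P = (∫ ω, G1 j ω ∂P) * ∫ ω, H ω ∂P :=
      (indepHG1 j).symm.integral_mul_eq_mul_integral (hG1meas j).aestronglyMeasurable
        hHmeas.aestronglyMeasurable
    have e3 : ∫ ω, (G * H1 j) ω ∂P = (∫ ω, G ω ∂P) * ∫ ω, H1 j ω ∂P :=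
      (indepH1G j).symm.integral_mul_eq_mul_integral hGmeas.aestronglyMeasurable
        (hH1meas j).aestronglyMeasurable
    have e4 : ∫ ω, (X ω j + (Su *ᵥ θ) j) * Real.exp (X ω ⬝ᵥ (θ + θ0)) ∂P
        = (∫ ω, X ω j * Real.exp (X ω ⬝ᵥ (θ + θ0)) ∂P)
          + (Su *ᵥ θ) j * ∫ ω, Real.exp (X ω ⬝ᵥ (θ + θ0)) ∂P := by
      rw [← integral_const_mul, ← integral_add (iXjE j) (hint4.const_mul _)]
      exact integral_congr_ae (Filter.Eventually.of_forall fun ω => by ring)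
    rw [e1, e2, e3, hIG, hIG1 j, hUm, (hUj j).2, e4]
    ring
  · have e1 : ∫ ω, Y ω * Real.exp (Z ω ⬝ᵥ θ) ∂P = ∫ ω, (G * H) ω ∂P :=
      integral_congr_ae (Filter.Eventually.of_forall fun ω => by
        simp only [Pi.mul_apply]; exact hpt2 ω)
    have e2 : ∫ ω, (G * H) ω ∂P = (∫ ω, G ω ∂P) * ∫ ω, H ω ∂P :=
      indepHG.symm.integral_mul_eq_mul_integral hGmeas.aestronglyMeasurable hHmeas.aestronglyMeasurable
    rw [e1, e2, hIG, hUm]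
    ring
end

section
/- Poisson regression conditional expectation: let V ~ N(0, Σ_u) be independent of (Y, Z) where Y ∈ ℤ≥0 and Z ∈ ℝᵖ, and set Z(λ) = Z + √λ V for λ ≥ 0. Then E[Y Z(λ)ᵀθ − exp(Z(λ)ᵀθ) | (Y, Z)] = Y Zᵀθ − exp(Zᵀθ) exp(λ θᵀΣ_uθ / 2). -/
open MeasureTheory ProbabilityTheory Matrix Real

open NNReal ENNReal

lemma gauss_pdf_eq (w : ℝ≥0) (x : ℝ) :
    gaussianPDFReal 0 w x
      = (Real.sqrt (2 * Real.pi * w))⁻¹ * Real.exp (-(((2:ℝ) * w)⁻¹) * x ^ 2) := by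
  simp only [gaussianPDFReal, sub_zero]
  congr 2
  ring

lemma gauss_pdf_even (w : ℝ≥0) (x : ℝ) :
    gaussianPDFReal 0 w (-x) = gaussianPDFReal 0 w x := by
  rw [gauss_pdf_eq, gauss_pdf_eq, neg_sq]

lemma integral_gauss_eq (w : ℝ≥0) (hw : w ≠ 0) (g : ℝ → ℝ) :
    ∫ x, g x ∂(gaussianReal 0 w) = ∫ x, gaussianPDFReal 0 w x * g x := by
  rw [gaussianReal_of_var_ne_zero _ hw]
  have h : gaussianPDF 0 w = fun x => ((gaussianPDFReal 0 w x).toNNReal : ℝ≥0∞) := rfl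
  rw [h, integral_withDensity_eq_integral_smul
    ((measurable_gaussianPDFReal 0 w).real_toNNReal) g]
  congr 1
  ext x
  rw [NNReal.smul_def, Real.coe_toNNReal _ (gaussianPDFReal_nonneg _ _ _), smul_eq_mul]

lemma integrable_gauss_iff (w : ℝ≥0) (hw : w ≠ 0) (g : ℝ → ℝ) :
    Integrable g (gaussianReal 0 w) ↔
      Integrable (fun x => gaussianPDFReal 0 w x * g x) := by
  rw [gaussianReal_of_var_ne_zero _ hw]
  have h : gaussianPDF 0 w = fun x => ((gaussianPDFReal 0 w x).toNNReal : ℝ≥0∞) := rfl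
  rw [h, integrable_withDensity_iff_integrable_smul
    ((measurable_gaussianPDFReal 0 w).real_toNNReal)]
  apply integrable_congr
  filter_upwards with x
  rw [NNReal.smul_def, Real.coe_toNNReal _ (gaussianPDFReal_nonneg _ _ _), smul_eq_mul]

lemma gauss_pdf_mul (w : ℝ≥0) (hw : w ≠ 0) (t x : ℝ) :
    gaussianPDFReal 0 w x * Real.exp (t * x)
      = ((Real.sqrt (2 * Real.pi * w))⁻¹ * Real.exp ((w : ℝ) * t ^ 2 / 2))
        * Real.exp (-(((2:ℝ) * w)⁻¹) * (x - t * w) ^ 2) := by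
  have hw' : (w : ℝ) ≠ 0 := by exact_mod_cast hw
  simp only [gaussianPDFReal, sub_zero]
  rw [mul_assoc, ← Real.exp_add, mul_assoc (_)⁻¹, ← Real.exp_add]
  congr 1
  field_simp
  ring

lemma integral_exp_gauss_vol (w : ℝ≥0) (hw : w ≠ 0) (t : ℝ) :
    ∫ x : ℝ, gaussianPDFReal 0 w x * Real.exp (t * x)
      = Real.exp ((w : ℝ) * t ^ 2 / 2) := by
  have hw0 : (0 : ℝ) < (w : ℝ) := lt_of_le_of_ne w.coe_nonneg (by exact_mod_cast (Ne.symm hw))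
  have hb : (0:ℝ) < ((2:ℝ) * w)⁻¹ := by positivity
  simp_rw [gauss_pdf_mul w hw t]
  rw [integral_const_mul, integral_sub_right_eq_self (fun x => Real.exp (-(((2:ℝ)*w)⁻¹) * x ^ 2)) (t * w)]
  rw [integral_gaussian]
  rw [show Real.pi / ((2:ℝ) * w)⁻¹ = 2 * Real.pi * w by field_simp]
  rw [mul_comm, ← mul_assoc, mul_inv_cancel₀ (by positivity : Real.sqrt (2*Real.pi*(w:ℝ)) ≠ 0), one_mul]

lemma integrable_exp_gauss_vol (w : ℝ≥0) (hw : w ≠ 0) (t : ℝ) :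
    Integrable (fun x : ℝ => gaussianPDFReal 0 w x * Real.exp (t * x)) := by
  have hw0 : (0 : ℝ) < (w : ℝ) := lt_of_le_of_ne w.coe_nonneg (by exact_mod_cast (Ne.symm hw))
  have hb : (0:ℝ) < ((2:ℝ) * w)⁻¹ := by positivity
  simp_rw [gauss_pdf_mul w hw t]
  exact ((integrable_exp_neg_mul_sq hb).comp_sub_right (t * w)).const_mul _

lemma integrable_exp_gauss (w : ℝ≥0) (t : ℝ) :
    Integrable (fun x => Real.exp (t * x)) (gaussianReal 0 w) := by
  by_cases hw : w = 0
  · rw [hw, gaussianReal_zero_var]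
    exact (integrable_const (Real.exp (t * 0))).congr (ae_eq_dirac (fun x : ℝ => Real.exp (t * x))).symm
  · exact (integrable_gauss_iff w hw _).2 (integrable_exp_gauss_vol w hw t)

lemma integral_exp_gauss (w : ℝ≥0) (t : ℝ) :
    ∫ x, Real.exp (t * x) ∂(gaussianReal 0 w) = Real.exp ((w : ℝ) * t ^ 2 / 2) := by
  by_cases hw : w = 0
  · simp [hw]
  · rw [integral_gauss_eq w hw, integral_exp_gauss_vol w hw t]

lemma integrable_id_gauss_vol (w : ℝ≥0) (hw : w ≠ 0) :
    Integrable (fun x : ℝ => gaussianPDFReal 0 w x * x) := by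
  have hw0 : (0 : ℝ) < (w : ℝ) := lt_of_le_of_ne w.coe_nonneg (by exact_mod_cast (Ne.symm hw))
  have hb : (0:ℝ) < ((2:ℝ) * w)⁻¹ := by positivity
  have h : ∀ x : ℝ, gaussianPDFReal 0 w x * x
      = (Real.sqrt (2 * Real.pi * w))⁻¹ * (x * Real.exp (-(((2:ℝ) * w)⁻¹) * x ^ 2)) := by
    intro x; rw [gauss_pdf_eq]; ring
  simp_rw [h]
  exact (integrable_mul_exp_neg_mul_sq hb).const_mul _

lemma integrable_id_gauss (w : ℝ≥0) :
    Integrable (fun x => x) (gaussianReal 0 w) := by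
  by_cases hw : w = 0
  · rw [hw, gaussianReal_zero_var]
    exact (integrable_const (0:ℝ)).congr (ae_eq_dirac (fun x : ℝ => x)).symm
  · exact (integrable_gauss_iff w hw _).2 (integrable_id_gauss_vol w hw)

lemma integral_id_gauss (w : ℝ≥0) :
    ∫ x, x ∂(gaussianReal 0 w) = 0 := by
  by_cases hw : w = 0
  · simp [hw]
  · rw [integral_gauss_eq w hw]
    have h := integral_neg_eq_self (fun x : ℝ => gaussianPDFReal 0 w x * x) volume
    simp_rw [gauss_pdf_even, mul_neg] at h
    rw [integral_neg] at h
    linarith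

lemma key_gauss (w : ℝ≥0) (cy c s : ℝ) :
    ∫ x, (cy * (c + s * x) - Real.exp (c + s * x)) ∂(gaussianReal 0 w)
      = cy * c - Real.exp c * Real.exp ((w : ℝ) * s ^ 2 / 2) := by
  have h1 : Integrable (fun x => cy * c + cy * s * x) (gaussianReal 0 w) :=
    (integrable_const _).add ((integrable_id_gauss w).const_mul (cy * s))
  have h2 : Integrable (fun x => Real.exp c * Real.exp (s * x)) (gaussianReal 0 w) :=
    (integrable_exp_gauss w s).const_mul _
  have heq : ∀ x : ℝ, cy * (c + s * x) - Real.exp (c + s * x)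
      = (cy * c + cy * s * x) - Real.exp c * Real.exp (s * x) := by
    intro x; rw [← Real.exp_add]; ring_nf
  simp_rw [heq]
  rw [integral_sub h1 h2, integral_add (integrable_const _)
    ((integrable_id_gauss w).const_mul (cy * s)), integral_const,
    integral_const_mul, integral_const_mul, integral_id_gauss, integral_exp_gauss]
  simp

/-- Poisson regression conditional expectation: for `V ~ N(0, Σ_u)` (Cramér–Wold
characterization) independent of `(Y, Z)`, with `Z(λ) = Z + √λ V` and `λ ≥ 0`, the
conditional expectation given `(Y, Z) = (y, z)` satisfies
`E[Y Z(λ)ᵀθ − exp(Z(λ)ᵀθ) | (Y, Z)] = Y Zᵀθ − exp(Zᵀθ) exp(λ θᵀΣ_uθ / 2)`. -/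
theorem poisson_simex_conditional_expectation {p : ℕ} {Ω : Type*} [MeasurableSpace Ω]
    (P : Measure Ω) [IsProbabilityMeasure P]
    (V : Ω → Fin p → ℝ) (hV : Measurable V)
    (Su : Matrix (Fin p) (Fin p) ℝ) (hSu : Su.PosSemidef)
    (hgauss : ∀ a : Fin p → ℝ,
      Measure.map (fun ω => (V ω) ⬝ᵥ a) P
        = gaussianReal 0 (Real.toNNReal (a ⬝ᵥ Su *ᵥ a)))
    (l : ℝ) (hl : 0 ≤ l) (y : ℕ) (z θ : Fin p → ℝ) :
    ∫ ω, ((y : ℝ) * ((z + Real.sqrt l • V ω) ⬝ᵥ θ)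
            - Real.exp ((z + Real.sqrt l • V ω) ⬝ᵥ θ)) ∂P
      = (y : ℝ) * (z ⬝ᵥ θ)
        - Real.exp (z ⬝ᵥ θ) * Real.exp (l * (θ ⬝ᵥ Su *ᵥ θ) / 2) := by
  have hX : Measurable (fun ω => V ω ⬝ᵥ θ) := by
    show Measurable fun ω => ∑ i, V ω i * θ i
    exact Finset.measurable_sum _ fun i _ => ((measurable_pi_apply i).comp hV).mul_const _
  have hdot : ∀ ω, (z + Real.sqrt l • V ω) ⬝ᵥ θ
      = z ⬝ᵥ θ + Real.sqrt l * (V ω ⬝ᵥ θ) := fun ω => by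
    rw [add_dotProduct, smul_dotProduct, smul_eq_mul]
  simp_rw [hdot]
  set w : ℝ≥0 := Real.toNNReal (θ ⬝ᵥ Su *ᵥ θ) with hw
  have hcont : Continuous (fun x : ℝ =>
      (y : ℝ) * (z ⬝ᵥ θ + Real.sqrt l * x) - Real.exp (z ⬝ᵥ θ + Real.sqrt l * x)) := by
    fun_prop
  have hmapint : ∫ ω, ((y : ℝ) * (z ⬝ᵥ θ + Real.sqrt l * (V ω ⬝ᵥ θ))
        - Real.exp (z ⬝ᵥ θ + Real.sqrt l * (V ω ⬝ᵥ θ))) ∂P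
      = ∫ x, ((y : ℝ) * (z ⬝ᵥ θ + Real.sqrt l * x)
        - Real.exp (z ⬝ᵥ θ + Real.sqrt l * x)) ∂(Measure.map (fun ω => V ω ⬝ᵥ θ) P) :=
    (integral_map hX.aemeasurable hcont.aestronglyMeasurable).symm
  rw [hmapint, hgauss θ, key_gauss]
  have h0 : 0 ≤ θ ⬝ᵥ Su *ᵥ θ := by simpa using hSu.dotProduct_mulVec_nonneg θ
  rw [Real.coe_toNNReal _ h0, Real.sq_sqrt hl]
  ring_nf
end
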